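/- arXiv:1301.6362 — 4 statements merged into one kernel-verified Lean document; each statement's English description precedes it below -/
import Mathlib

section
/- The injection distance d_I(U,V) = max(dim U, dim V) - dim(U ∩ V) is a metric on the set of subspaces of a finite-dimensional vector space. -/
/-- The injection distance between two subspaces, as an integer. -/
noncomputable def injectionDist {K : Type*} [Field K] {W : Type*} [AddCommGroup W]
    [Module K W] (U V : Submodule K W) : ℤ :=
  max (Module.finrank K U) (Module.finrank K V) - Module.finrank K ↥(U ⊓ V)

theorem injection_distance_is_metric
    {K : Type*} [Field K] {W : Type*} [AddCommGroup W] [Module K W]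
    [FiniteDimensional K W] :
    (∀ U V : Submodule K W, 0 ≤ injectionDist U V) ∧
    (∀ U V : Submodule K W, injectionDist U V = injectionDist V U) ∧
    (∀ U V : Submodule K W, injectionDist U V = 0 ↔ U = V) ∧
    (∀ U V X : Submodule K W, injectionDist U V ≤ injectionDist U X + injectionDist X V) := by
  have hle : ∀ U V : Submodule K W,
      Module.finrank K ↥(U ⊓ V) ≤ Module.finrank K U := fun U V =>
    Submodule.finrank_mono inf_le_left
  refine ⟨?_, ?_, ?_, ?_⟩
  · intro U V
    have h1 := hle U V
    simp only [injectionDist]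
    have : (Module.finrank K ↥(U ⊓ V) : ℤ) ≤ max (Module.finrank K U) (Module.finrank K V) := by
      exact_mod_cast le_trans h1 (le_max_left _ _)
    omega
  · intro U V
    rw [injectionDist, injectionDist, inf_comm, max_comm]
  · intro U V
    constructor
    · intro h
      have h1 := hle U V
      have h2 : Module.finrank K ↥(U ⊓ V) ≤ Module.finrank K V := by
        rw [inf_comm]; exact hle V U
      simp only [injectionDist] at h
      have hmax : (max (Module.finrank K U) (Module.finrank K V) : ℤ)
          = Module.finrank K ↥(U ⊓ V) := by omega
      have hU : Module.finrank K ↥(U ⊓ V) = Module.finrank K U := by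
        rcases max_cases (Module.finrank K U : ℤ) (Module.finrank K V) with ⟨he, hge⟩ | ⟨he, hlt⟩
        · omega
        · rw [he] at hmax; omega
      have hV : Module.finrank K ↥(U ⊓ V) = Module.finrank K V := by
        rcases max_cases (Module.finrank K U : ℤ) (Module.finrank K V) with ⟨he, hge⟩ | ⟨he, hlt⟩
        · rw [he] at hmax; omega
        · omega
      have e1 : U ⊓ V = U := Submodule.eq_of_le_of_finrank_eq inf_le_left hU
      have e2 : U ⊓ V = V := Submodule.eq_of_le_of_finrank_eq inf_le_right hV
      rw [← e1, e2]
    · rintro rfl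
      simp [injectionDist]; rw [inf_idem]; ring
  · intro U V X
    simp only [injectionDist]
    set dU := Module.finrank K U
    set dV := Module.finrank K V
    set dX := Module.finrank K X
    -- key: dim(U⊓X) + dim(X⊓V) ≤ dX + dim(U⊓V)
    have key : Module.finrank K ↥(U ⊓ X) + Module.finrank K ↥(X ⊓ V)
        ≤ dX + Module.finrank K ↥(U ⊓ V) := by
      have heq := Submodule.finrank_sup_add_finrank_inf_eq (U ⊓ X) (X ⊓ V)
      have h1 : Module.finrank K ↥((U ⊓ X) ⊔ (X ⊓ V)) ≤ dX :=
        Submodule.finrank_mono (sup_le inf_le_right inf_le_left)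
      have h2 : Module.finrank K ↥((U ⊓ X) ⊓ (X ⊓ V)) ≤ Module.finrank K ↥(U ⊓ V) :=
        Submodule.finrank_mono (le_inf (le_trans inf_le_left inf_le_left)
          (le_trans inf_le_right inf_le_right))
      omega
    have hmax : (max dU dV : ℤ) + dX ≤ max dU dX + max dX dV := by
      rcases le_total dU dV with h | h
      · have : (max dU dV : ℤ) = dV := by exact_mod_cast max_eq_right h
        have h2 : (dX : ℤ) ≤ max dU dX := by exact_mod_cast le_max_right dU dX
        have h3 : (dV : ℤ) ≤ max dX dV := by exact_mod_cast le_max_right dX dV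
        omega
      · have : (max dU dV : ℤ) = dU := by exact_mod_cast max_eq_left h
        have h2 : (dU : ℤ) ≤ max dU dX := by exact_mod_cast le_max_left dU dX
        have h3 : (dX : ℤ) ≤ max dX dV := by exact_mod_cast le_max_left dX dV
        omega
    have keyZ : (Module.finrank K ↥(U ⊓ X) : ℤ) + Module.finrank K ↥(X ⊓ V)
        ≤ dX + Module.finrank K ↥(U ⊓ V) := by exact_mod_cast key
    omega
end

section
/- If U and V are subspaces of F_q^n spanned by the rows of matrices in reduced row echelon form whose pivot (leading-one) column index sets are A and B respectively, then dim(U ∩ V) ≤ (dim U + dim V - |A Δ B|)/2, where A Δ B denotes the symmetric difference. -/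
open Finset

/-- A matrix is in reduced row echelon form with pivot (leading-one) column of row `i`
given by `p i`. -/
def IsRREF {F : Type*} [Field F] {k n : ℕ}
    (M : Matrix (Fin k) (Fin n) F) (p : Fin k → Fin n) : Prop :=
  StrictMono p ∧
  (∀ i, M i (p i) = 1) ∧
  (∀ i (j : Fin n), (j : ℕ) < (p i : ℕ) → M i j = 0) ∧
  (∀ i i', i' ≠ i → M i' (p i) = 0)

section aux
variable {F : Type*} [Field F] {k n : ℕ} {M : Matrix (Fin k) (Fin n) F} {p : Fin k → Fin n}

lemma rref_eval (hM : IsRREF M p) (c : Fin k → F) (i : Fin k) :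
    (∑ j, c j • M j) (p i) = c i := by
  simp only [Finset.sum_apply, Pi.smul_apply, smul_eq_mul]
  rw [Finset.sum_eq_single i]
  · rw [hM.2.1 i, mul_one]
  · intro j _ hj
    rw [hM.2.2.2 i j hj, mul_zero]
  · simp

lemma rref_repr (hM : IsRREF M p) {x : Fin n → F}
    (hx : x ∈ Submodule.span F (Set.range M)) : x = ∑ i, x (p i) • M i := by
  obtain ⟨c, hc⟩ := (Submodule.mem_span_range_iff_exists_fun F).1 hx
  rw [← hc]
  exact (Finset.sum_congr rfl (fun i _ => by rw [rref_eval hM c i])).symm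

lemma rref_lead (hM : IsRREF M p) (c : Fin k → F) (i0 : Fin k)
    (hc : ∀ i, i < i0 → c i = 0) (j : Fin n) (hj : (j : ℕ) < (p i0 : ℕ)) :
    (∑ i, c i • M i) j = 0 := by
  simp only [Finset.sum_apply, Pi.smul_apply, smul_eq_mul]
  apply Finset.sum_eq_zero
  intro i _
  rcases lt_or_ge i i0 with h | h
  · rw [hc i h, zero_mul]
  · rw [hM.2.2.1 i j (lt_of_lt_of_le hj (by exact_mod_cast hM.1.monotone h)), mul_zero]

lemma rref_finrank (hM : IsRREF M p) :
    Module.finrank F (Submodule.span F (Set.range M)) = k := by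
  have hli : LinearIndependent F M := by
    refine Fintype.linearIndependent_iff.2 ?_
    intro g hg i
    have := rref_eval hM g i
    rw [hg] at this
    simpa using this.symm
  rw [finrank_span_eq_card hli, Fintype.card_fin]

end aux

lemma rref_inter_zero {F : Type*} [Field F] {n k l : ℕ}
    {M : Matrix (Fin k) (Fin n) F} {N : Matrix (Fin l) (Fin n) F}
    {p : Fin k → Fin n} {q : Fin l → Fin n}
    (hM : IsRREF M p) (hN : IsRREF N q) {x : Fin n → F}
    (hxU : x ∈ Submodule.span F (Set.range M))
    (hxV : x ∈ Submodule.span F (Set.range N))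
    (hz : ∀ t : Fin n, t ∈ Finset.image p Finset.univ → t ∈ Finset.image q Finset.univ →
      x t = 0) : x = 0 := by
  classical
  by_contra hx
  have hrM := rref_repr hM hxU
  have hrN := rref_repr hN hxV
  have hsM : (Finset.univ.filter (fun i => x (p i) ≠ 0)).Nonempty := by
    by_contra h
    apply hx
    rw [Finset.not_nonempty_iff_eq_empty, Finset.filter_eq_empty_iff] at h
    simp only [not_not] at h
    rw [hrM]
    exact Finset.sum_eq_zero (fun i _ => by rw [h (Finset.mem_univ i), zero_smul])
  have hsN : (Finset.univ.filter (fun j => x (q j) ≠ 0)).Nonempty := by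
    by_contra h
    apply hx
    rw [Finset.not_nonempty_iff_eq_empty, Finset.filter_eq_empty_iff] at h
    simp only [not_not] at h
    rw [hrN]
    exact Finset.sum_eq_zero (fun i _ => by rw [h (Finset.mem_univ i), zero_smul])
  set i0 := Finset.min' _ hsM with hi0
  set j0 := Finset.min' _ hsN with hj0
  have hi0m : x (p i0) ≠ 0 := by
    have := Finset.min'_mem _ hsM
    rw [Finset.mem_filter] at this; exact this.2
  have hj0m : x (q j0) ≠ 0 := by
    have := Finset.min'_mem _ hsN
    rw [Finset.mem_filter] at this; exact this.2
  have hleadM : ∀ t : Fin n, (t : ℕ) < (p i0 : ℕ) → x t = 0 := by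
    intro t ht
    rw [hrM]
    refine rref_lead hM _ i0 (fun i hi => ?_) t ht
    by_contra h
    exact absurd (Finset.min'_le _ i (Finset.mem_filter.2 ⟨Finset.mem_univ i, h⟩))
      (not_le.2 hi)
  have hleadN : ∀ t : Fin n, (t : ℕ) < (q j0 : ℕ) → x t = 0 := by
    intro t ht
    rw [hrN]
    refine rref_lead hN _ j0 (fun i hi => ?_) t ht
    by_contra h
    exact absurd (Finset.min'_le _ i (Finset.mem_filter.2 ⟨Finset.mem_univ i, h⟩))
      (not_le.2 hi)
  have heq : p i0 = q j0 := by
    rcases lt_trichotomy ((p i0 : ℕ)) ((q j0 : ℕ)) with h | h | h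
    · exact absurd (hleadN (p i0) h) hi0m
    · exact Fin.ext h
    · exact absurd (hleadM (q j0) h) hj0m
  exact hi0m (hz (p i0) (Finset.mem_image_of_mem p (Finset.mem_univ i0))
    (heq ▸ Finset.mem_image_of_mem q (Finset.mem_univ j0)))

theorem inter_dim_le_of_rref
    {F : Type*} [Field F] [Fintype F] {n k l : ℕ}
    (M : Matrix (Fin k) (Fin n) F) (N : Matrix (Fin l) (Fin n) F)
    (p : Fin k → Fin n) (q : Fin l → Fin n)
    (hM : IsRREF M p) (hN : IsRREF N q)
    (U V : Submodule F (Fin n → F))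
    (hU : U = Submodule.span F (Set.range M))
    (hV : V = Submodule.span F (Set.range N)) :
    (Module.finrank F ↥(U ⊓ V) : ℚ) ≤
      ((Module.finrank F U : ℚ) + Module.finrank F V
        - (symmDiff (Finset.image p Finset.univ) (Finset.image q Finset.univ)).card) / 2 := by
  set A := Finset.image p Finset.univ with hA
  set B := Finset.image q Finset.univ with hB
  -- finrank U = k, finrank V = l
  have hrU : Module.finrank F U = k := by rw [hU]; exact rref_finrank hM
  have hrV : Module.finrank F V = l := by rw [hV]; exact rref_finrank hN
  have hcA : A.card = k := by
    rw [hA, Finset.card_image_of_injective _ hM.1.injective, Finset.card_univ,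
      Fintype.card_fin]
  have hcB : B.card = l := by
    rw [hB, Finset.card_image_of_injective _ hN.1.injective, Finset.card_univ,
      Fintype.card_fin]
  -- card symmDiff
  have hsd : (symmDiff A B).card + 2 * (A ∩ B).card = A.card + B.card := by
    have h1 : symmDiff A B = (A ∪ B) \ (A ∩ B) := by
      ext t
      simp only [Finset.mem_symmDiff, Finset.mem_union, Finset.mem_sdiff, Finset.mem_inter]
      tauto
    have h2 : (A ∩ B) ⊆ (A ∪ B) := Finset.inter_subset_union
    rw [h1, Finset.card_sdiff_of_subset h2]
    have h3 := Finset.card_union_add_card_inter A B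
    have h4 : (A ∩ B).card ≤ (A ∪ B).card := Finset.card_le_card h2
    omega
  -- injectivity into coords on A ∩ B
  have hinj : Module.finrank F ↥(U ⊓ V) ≤ (A ∩ B).card := by
    classical
    let Φ : (Fin n → F) →ₗ[F] ((A ∩ B : Finset (Fin n)) → F) :=
      LinearMap.funLeft F F (fun s => (s : Fin n))
    have hinj' : Function.Injective (Φ.comp (U ⊓ V).subtype) := by
      rw [← LinearMap.ker_eq_bot, LinearMap.ker_eq_bot']
      intro m hm
      have hz : ∀ t : Fin n, t ∈ A → t ∈ B → (m : Fin n → F) t = 0 := by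
        intro t htA htB
        have : Φ (m : Fin n → F) = 0 := hm
        have := congrFun this ⟨t, Finset.mem_inter.2 ⟨htA, htB⟩⟩
        exact this
      have hm2 := m.2
      rw [Submodule.mem_inf] at hm2
      have : (m : Fin n → F) = 0 :=
        rref_inter_zero hM hN (hU ▸ hm2.1) (hV ▸ hm2.2) hz
      exact Subtype.ext this
    calc Module.finrank F ↥(U ⊓ V) ≤ Module.finrank F ((A ∩ B : Finset (Fin n)) → F) :=
          LinearMap.finrank_le_finrank_of_injective hinj'
      _ = (A ∩ B).card := by
          rw [Module.finrank_pi, Fintype.card_coe]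
  rw [hrU, hrV]
  have h2 : ((symmDiff A B).card : ℚ) + 2 * ((A ∩ B).card : ℚ) = k + l := by
    rw [hcA, hcB] at hsd
    exact_mod_cast congrArg (fun m : ℕ => (m : ℚ)) hsd
  have h3 : (Module.finrank F ↥(U ⊓ V) : ℚ) ≤ ((A ∩ B).card : ℚ) := by exact_mod_cast hinj
  linarith
end

section
/- Let G₁, G₂ be d×(n−d) matrices over F_q belonging to an additive group 𝒢 of matrices in which every nonzero element has rank at least r/2. Let C(Gᵢ) = A_α + Gᵢ·A_α^c, where A_α is the d×n Schubert cell matrix with identity in the columns indexed by α and zeros elsewhere, and A_α^c is the (n−d)×n complementary Schubert cell matrix. If G₁ ≠ G₂, then the row spaces of C(G₁) and C(G₂) are d-dimensional subspaces with subspace distance at least r. -/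
open Matrix

lemma schubert_key {F : Type*} [Field F] {n d : ℕ}
    (a : Fin d → Fin n) (b : Fin (n - d) → Fin n)
    (ha : Function.Injective a) (hb : Function.Injective b)
    (hab : ∀ i k, a i ≠ b k)
    (G : Matrix (Fin d) (Fin (n - d)) F) (x : Fin d → F) :
    (∀ i, (x ᵥ* ((Matrix.of fun i j => if j = a i then (1:F) else 0) +
      G * Matrix.of fun i j => if j = b i then (1:F) else 0)) (a i) = x i) ∧
    (∀ k, (x ᵥ* ((Matrix.of fun i j => if j = a i then (1:F) else 0) +
      G * Matrix.of fun i j => if j = b i then (1:F) else 0)) (b k) = (x ᵥ* G) k) := by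
  have h1 : ∀ k j, (G * Matrix.of fun i j => if j = b i then (1:F) else 0) j (b k) = G j k := by
    intro k j
    simp [Matrix.mul_apply, hb.eq_iff]
  have h2 : ∀ i j, (G * Matrix.of fun i j => if j = b i then (1:F) else 0) j (a i) = 0 := by
    intro i j
    simp only [Matrix.mul_apply, Matrix.of_apply]
    apply Finset.sum_eq_zero
    intro k _
    simp [hab i k]
  constructor
  · intro i
    simp only [Matrix.vecMul, dotProduct, Matrix.add_apply, Matrix.of_apply, h2,
      add_zero, ha.eq_iff]
    simp [eq_comm]
  · intro k
    simp only [Matrix.vecMul, dotProduct, Matrix.add_apply, Matrix.of_apply, h1]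
    have : ∀ j, (if b k = a j then (1:F) else 0) = 0 := fun j => by simp [(hab j k).symm]
    simp [this]

theorem schubert_cell_code_distance
    {F : Type*} [Field F] [Fintype F] {n d r : ℕ} (hdn : d ≤ n)
    (a : Fin d → Fin n) (b : Fin (n - d) → Fin n)
    (ha : StrictMono a) (hb : StrictMono b)
    (hcompl : Set.range b = (Set.range a)ᶜ)
    -- the Schubert cell matrix and its complementary Schubert cell matrix
    (Aα : Matrix (Fin d) (Fin n) F) (Aαc : Matrix (Fin (n - d)) (Fin n) F)
    (hAα : Aα = Matrix.of fun i j => if j = a i then 1 else 0)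
    (hAαc : Aαc = Matrix.of fun i j => if j = b i then 1 else 0)
    (𝒢 : AddSubgroup (Matrix (Fin d) (Fin (n - d)) F))
    (hrank : ∀ G ∈ 𝒢, G ≠ 0 → (r : ℚ) / 2 ≤ G.rank)
    (G₁ G₂ : Matrix (Fin d) (Fin (n - d)) F)
    (hG₁ : G₁ ∈ 𝒢) (hG₂ : G₂ ∈ 𝒢) (hne : G₁ ≠ G₂)
    (U₁ U₂ : Submodule F (Fin n → F))
    (hU₁ : U₁ = Submodule.span F (Set.range (Aα + G₁ * Aαc)))
    (hU₂ : U₂ = Submodule.span F (Set.range (Aα + G₂ * Aαc))) :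
    Module.finrank F U₁ = d ∧ Module.finrank F U₂ = d ∧
    (r : ℤ) ≤ (Module.finrank F U₁ : ℤ) + Module.finrank F U₂
      - 2 * Module.finrank F ↥(U₁ ⊓ U₂) := by
  classical
  have hab : ∀ i k, a i ≠ b k := by
    intro i k h
    have hk : b k ∈ (Set.range a)ᶜ := hcompl ▸ ⟨k, rfl⟩
    exact hk ⟨i, h⟩
  have key : ∀ (G : Matrix (Fin d) (Fin (n - d)) F) (x : Fin d → F),
      (∀ i, (x ᵥ* (Aα + G * Aαc)) (a i) = x i) ∧
      (∀ k, (x ᵥ* (Aα + G * Aαc)) (b k) = (x ᵥ* G) k) := by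
    intro G x
    rw [hAα, hAαc]
    exact schubert_key a b ha.injective hb.injective hab G x
  set φ : (Fin n → F) →ₗ[F] (Fin d → F) := LinearMap.funLeft F F a with hφ
  have hcomp : ∀ (G : Matrix (Fin d) (Fin (n - d)) F) (x : Fin d → F),
      φ ((Aα + G * Aαc).vecMulLinear x) = x := by
    intro G x
    funext i
    exact (key G x).1 i
  -- ranges and injectivity
  have hspan : ∀ (G : Matrix (Fin d) (Fin (n - d)) F),
      Submodule.span F (Set.range (Aα + G * Aαc)) =
        LinearMap.range (Aα + G * Aαc).vecMulLinear :=
    fun G => (range_vecMulLinear _).symm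
  have hinj : ∀ (G : Matrix (Fin d) (Fin (n - d)) F),
      Function.Injective (Aα + G * Aαc).vecMulLinear := by
    intro G
    apply Function.LeftInverse.injective (g := φ)
    intro x
    exact hcomp G x
  have hdim : ∀ (G : Matrix (Fin d) (Fin (n - d)) F),
      Module.finrank F (Submodule.span F (Set.range (Aα + G * Aαc))) = d := by
    intro G
    rw [hspan G, LinearMap.finrank_range_of_inj (hinj G), Module.finrank_pi, Fintype.card_fin]
  -- the difference matrix
  set D := G₁ - G₂ with hD
  have hDmem : D ∈ 𝒢 := sub_mem hG₁ hG₂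
  have hDne : D ≠ 0 := sub_ne_zero.mpr hne
  have hr2 : r ≤ 2 * D.rank := by
    have h0 := hrank D hDmem hDne
    have h1 : (r : ℚ) ≤ 2 * D.rank := by linarith
    exact_mod_cast h1
  -- rank of D via vecMulLinear
  have hvm : D.vecMulLinear = Dᵀ.mulVecLin := by
    ext x j
    simp [Matrix.mulVec_transpose]
  have hrankD : Module.finrank F (LinearMap.range D.vecMulLinear) = D.rank := by
    rw [hvm]
    exact (Matrix.rank_transpose D) ▸ rfl
  have hRN : Module.finrank F (LinearMap.range D.vecMulLinear)
      + Module.finrank F (LinearMap.ker D.vecMulLinear) = d := by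
    rw [LinearMap.finrank_range_add_finrank_ker, Module.finrank_pi, Fintype.card_fin]
  -- inclusion of intersection into the kernel
  have hsub : ∀ v, v ∈ U₁ ⊓ U₂ → φ v ∈ LinearMap.ker D.vecMulLinear ∧
      v = (Aα + G₁ * Aαc).vecMulLinear (φ v) := by
    intro v hv
    obtain ⟨hv₁, hv₂⟩ := hv
    rw [hU₁, hspan G₁] at hv₁
    rw [hU₂, hspan G₂] at hv₂
    obtain ⟨x, hx⟩ := hv₁
    obtain ⟨y, hy⟩ := hv₂
    have hxv : φ v = x := by rw [← hx]; exact hcomp G₁ x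
    have hyv : φ v = y := by rw [← hy]; exact hcomp G₂ y
    refine ⟨?_, by rw [hxv, hx]⟩
    rw [LinearMap.mem_ker]
    funext k
    have e1 : (x ᵥ* G₁) k = v (b k) := by rw [← hx]; exact ((key G₁ x).2 k).symm
    have e2 : (y ᵥ* G₂) k = v (b k) := by rw [← hy]; exact ((key G₂ y).2 k).symm
    have hxy : x = y := by rw [← hxv, ← hyv]
    simp only [Matrix.vecMulLinear_apply, hxv, hD, Matrix.vecMul_sub, Pi.sub_apply,
      Pi.zero_apply]
    rw [e1, hxy, e2, sub_self]
  -- the injective map from the intersection into the kernel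
  let f : ↥(U₁ ⊓ U₂) →ₗ[F] ↥(LinearMap.ker D.vecMulLinear) :=
    LinearMap.codRestrict _ (φ.comp (Submodule.subtype _))
      (fun v => (hsub v v.2).1)
  have hfinj : Function.Injective f := by
    intro v w h
    have h' : φ v.1 = φ w.1 := congrArg Subtype.val h
    have := (hsub v.1 v.2).2
    ext1
    rw [(hsub v.1 v.2).2, (hsub w.1 w.2).2, h']
  have hle : Module.finrank F ↥(U₁ ⊓ U₂)
      ≤ Module.finrank F (LinearMap.ker D.vecMulLinear) :=
    LinearMap.finrank_le_finrank_of_injective hfinj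
  refine ⟨by rw [hU₁]; exact hdim G₁, by rw [hU₂]; exact hdim G₂, ?_⟩
  rw [hU₁, hU₂, hdim G₁, hdim G₂]
  rw [hU₁, hU₂] at hle
  rw [hrankD] at hRN
  omega
end

section
/- If 𝒞 ⊆ F_q^{l×m} is a rank-metric code with minimum rank distance δ (i.e., rank(X − Y) ≥ δ for distinct X, Y ∈ 𝒞), then the lifted subspace code I(𝒞) = {rowspace([I_l X]) : X ∈ 𝒞} is a constant-dimension code in the Grassmannian of l-dimensional subspaces of F_q^{l+m} with minimum subspace distance 2δ. -/
/-- The lifting of a matrix `X`: the row space of the block matrix `[I X]`. -/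
noncomputable def lifting {F : Type*} [Field F] {l m : ℕ}
    (X : Matrix (Fin l) (Fin m) F) : Submodule F (Fin l ⊕ Fin m → F) :=
  Submodule.span F (Set.range (Matrix.fromCols (1 : Matrix (Fin l) (Fin l) F) X))

open Matrix

lemma lifting_eq_range {F : Type*} [Field F] {l m : ℕ} (X : Matrix (Fin l) (Fin m) F) :
    lifting X = LinearMap.range (fromCols (1 : Matrix (Fin l) (Fin l) F) X).vecMulLinear :=
  (range_vecMulLinear _).symm

lemma fromColumns_one_inj {F : Type*} [Field F] {l m : ℕ} (X : Matrix (Fin l) (Fin m) F) :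
    Function.Injective (fromCols (1 : Matrix (Fin l) (Fin l) F) X).vecMulLinear := by
  intro a b h
  have h' := congrFun (show (a ᵥ* _) = (b ᵥ* _) from h)
  funext i
  have := h' (Sum.inl i)
  simpa using this

lemma lifting_inter {F : Type*} [Field F] {l m : ℕ} (X Y : Matrix (Fin l) (Fin m) F) :
    lifting X ⊓ lifting Y =
      Submodule.map (fromCols (1 : Matrix (Fin l) (Fin l) F) X).vecMulLinear
        (LinearMap.ker (X - Y).vecMulLinear) := by
  ext v
  simp only [lifting_eq_range, Submodule.mem_inf, LinearMap.mem_range, Submodule.mem_map,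
    LinearMap.mem_ker, vecMulLinear_apply]
  constructor
  · rintro ⟨⟨c, hc⟩, ⟨d, hd⟩⟩
    have hcd : c = d := by
      funext i
      have := congrFun (hc.trans hd.symm) (Sum.inl i)
      simpa using this
    subst hcd
    refine ⟨c, ?_, hc⟩
    have := congrFun (hc.trans hd.symm)
    funext j
    have h2 := this (Sum.inr j)
    simp only [vecMul_fromCols, Sum.elim_inr] at h2
    simp [Matrix.vecMul_sub, h2]
  · rintro ⟨c, hker, hv⟩
    refine ⟨⟨c, hv⟩, ⟨c, ?_⟩⟩
    rw [← hv]
    have : c ᵥ* X = c ᵥ* Y := by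
      have := congrFun hker
      funext j
      have h2 := this j
      simp only [Matrix.vecMul_sub, Pi.sub_apply, Pi.zero_apply, sub_eq_zero] at h2
      exact h2
    simp [this]

theorem lifted_rank_metric_code
    {F : Type*} [Field F] [Fintype F] {l m δ : ℕ}
    (𝒞 : Set (Matrix (Fin l) (Fin m) F))
    (hδ : ∀ X ∈ 𝒞, ∀ Y ∈ 𝒞, X ≠ Y → δ ≤ (X - Y).rank) :
    (∀ X ∈ 𝒞, Module.finrank F (lifting X) = l) ∧
    (∀ X ∈ 𝒞, ∀ Y ∈ 𝒞, X ≠ Y →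
      (2 * δ : ℤ) ≤ (Module.finrank F (lifting X) : ℤ) + Module.finrank F (lifting Y)
        - 2 * Module.finrank F ↥(lifting X ⊓ lifting Y)) := by
  have hdim : ∀ X : Matrix (Fin l) (Fin m) F, Module.finrank F (lifting X) = l := by
    intro X
    rw [lifting_eq_range, LinearMap.finrank_range_of_inj (fromColumns_one_inj X)]
    simp
  refine ⟨fun X _ => hdim X, fun X hX Y hY hne => ?_⟩
  have hr := hδ X hX Y hY hne
  -- dim of intersection
  have hint : Module.finrank F ↥(lifting X ⊓ lifting Y)
      = Module.finrank F ↥(LinearMap.ker (X - Y).vecMulLinear) := by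
    rw [lifting_inter]
    exact (Submodule.equivMapOfInjective _ (fromColumns_one_inj X) _).finrank_eq.symm
  -- rank-nullity for vecMulLinear
  have hrank : (X - Y).rank = Module.finrank F (LinearMap.range (X - Y).vecMulLinear) := by
    rw [← Matrix.rank_transpose (X - Y), ← Matrix.mulVecLin_transpose]
    rfl
  have hrn := LinearMap.finrank_range_add_finrank_ker (X - Y).vecMulLinear
  rw [Module.finrank_pi F, Fintype.card_fin] at hrn
  rw [hdim X, hdim Y, hint]
  omega
end
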